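/- Let M be an N×N nonnegative irreducible matrix, let v be an entrywise positive vector, and let λ be a real number with M v = λ v. Then λ equals the spectral radius of M. -/

import Mathlib

open Matrix Polynomial

/-- A matrix is irreducible if the directed graph on its indices, with an edge `i → j`
whenever `M i j ≠ 0`, is strongly connected. -/
def MatIrreducible {N : ℕ} (M : Matrix (Fin N) (Fin N) ℝ) : Prop :=
  ∀ i j : Fin N, Relation.TransGen (fun a b => M a b ≠ 0) i j

/-- The spectral radius of a real matrix: the maximum modulus of its complex eigenvalues
(the roots of the characteristic polynomial of its complexification). -/
noncomputable def specRad {N : ℕ} (M : Matrix (Fin N) (Fin N) ℝ) : ℝ :=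
  sSup {r : ℝ | ∃ μ : ℂ, ((M.map (Complex.ofReal)).charpoly).IsRoot μ ∧ r = ‖μ‖}

lemma my_charpoly_eval {N : ℕ} {K : Type*} [Field K] (A : Matrix (Fin N) (Fin N) K) (μ : K) :
    A.charpoly.eval μ = (Matrix.diagonal (fun _ => μ) - A).det := by
  rw [Matrix.charpoly, ← Polynomial.coe_evalRingHom, RingHom.map_det]
  congr 1
  ext i j
  by_cases h : i = j <;>
    simp [Matrix.charmatrix_apply, Matrix.diagonal, h]

lemma my_isRoot_iff {N : ℕ} {K : Type*} [Field K] (A : Matrix (Fin N) (Fin N) K) (μ : K) :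
    A.charpoly.IsRoot μ ↔ ∃ w : Fin N → K, w ≠ 0 ∧ A.mulVec w = μ • w := by
  have key : ∀ w : Fin N → K,
      (Matrix.diagonal (fun _ => μ) - A).mulVec w = μ • w - A.mulVec w := by
    intro w
    rw [Matrix.sub_mulVec]
    congr 1
    have : (Matrix.diagonal (fun _ : Fin N => μ)) = μ • (1 : Matrix (Fin N) (Fin N) K) := by
      rw [smul_eq_diagonal_mul, Matrix.mul_one]
    rw [this, Matrix.smul_mulVec, Matrix.one_mulVec]
  rw [Polynomial.IsRoot, my_charpoly_eval, ← Matrix.exists_mulVec_eq_zero_iff]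
  constructor
  · rintro ⟨w, hw, hmul⟩
    exact ⟨w, hw, by rw [key] at hmul; linear_combination (norm := module) -hmul⟩
  · rintro ⟨w, hw, hmul⟩
    exact ⟨w, hw, by rw [key, hmul, sub_self]⟩

set_option maxHeartbeats 1000000 in
/-- If `M` is an `N×N` nonnegative irreducible matrix, `v` is an entrywise
positive vector and `λ` is a real number with `M v = λ v`, then `λ` is the spectral
radius of `M`. -/
theorem eigenvalue_of_positive_eigenvector_eq_spectral_radius
    (N : ℕ) (hN : 0 < N) (M : Matrix (Fin N) (Fin N) ℝ)
    (hM0 : ∀ i j, 0 ≤ M i j) (hMirr : MatIrreducible M)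
    (v : Fin N → ℝ) (hv : ∀ i, 0 < v i)
    (lam : ℝ) (hMv : M.mulVec v = lam • v) :
    specRad M = lam := by
  have : NeZero N := ⟨hN.ne'⟩
  rw [specRad]
  set A := M.map (Complex.ofReal) with hA
  set S := {r : ℝ | ∃ μ : ℂ, (A.charpoly).IsRoot μ ∧ r = ‖μ‖} with hS
  have hlam0 : 0 ≤ lam := by
    have h0 : (M.mulVec v) 0 = lam * v 0 := by rw [hMv]; rfl
    have hsum : 0 ≤ (M.mulVec v) 0 := by
      rw [Matrix.mulVec, dotProduct]
      exact Finset.sum_nonneg fun j _ => mul_nonneg (hM0 0 j) (hv j).le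
    nlinarith [hv 0]
  have hmem : lam ∈ S := by
    refine ⟨(lam : ℂ), ?_, by simp [abs_of_nonneg hlam0]⟩
    have hreal : M.charpoly.IsRoot lam := by
      rw [my_isRoot_iff]
      exact ⟨v, fun h => (hv 0).ne' (congrFun h 0), hMv⟩
    have hmap : A.charpoly = M.charpoly.map (Complex.ofRealHom) := by
      rw [hA]
      exact Matrix.charpoly_map M Complex.ofRealHom
    rw [hmap]
    exact hreal.map
  have hbound : ∀ r ∈ S, r ≤ lam := by
    rintro r ⟨μ, hroot, rfl⟩
    obtain ⟨w, hw, hmul⟩ := (my_isRoot_iff A μ).mp hroot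
    obtain ⟨i0, -, hi0⟩ := Finset.exists_max_image Finset.univ
      (fun i => ‖w i‖ / v i) ⟨0, Finset.mem_univ 0⟩
    set c := ‖w i0‖ / v i0 with hc
    obtain ⟨j, hj⟩ := Function.ne_iff.mp hw
    have hcpos : 0 < c := by
      have h1 : 0 < ‖w j‖ / v j :=
        div_pos (norm_pos_iff.mpr hj) (hv j)
      exact lt_of_lt_of_le h1 (hi0 j (Finset.mem_univ j))
    have hwle : ∀ i, ‖w i‖ ≤ c * v i := by
      intro i
      have h := hi0 i (Finset.mem_univ i)
      rw [div_le_iff₀ (hv i)] at h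
      linarith [h]
    have hwi0 : ‖w i0‖ = c * v i0 := by
      rw [hc, div_mul_cancel₀ _ (hv i0).ne']
    have h1 : ‖(A.mulVec w) i0‖ = ‖μ‖ * ‖w i0‖ := by
      rw [hmul]
      simp [_root_.map_mul]
    have h2 : ‖(A.mulVec w) i0‖ ≤ ∑ j, M i0 j * ‖w j‖ := by
      have he : (A.mulVec w) i0 = ∑ j, A i0 j * w j := rfl
      rw [he]
      refine (norm_sum_le _ _).trans_eq ?_
      refine Finset.sum_congr rfl fun j _ => ?_
      rw [norm_mul]
      simp [hA, Matrix.map_apply, Complex.norm_real, abs_of_nonneg (hM0 i0 j)]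
    have h3 : ∑ j, M i0 j * ‖w j‖ ≤ ∑ j, M i0 j * (c * v j) :=
      Finset.sum_le_sum fun j _ => mul_le_mul_of_nonneg_left (hwle j) (hM0 i0 j)
    have h4 : ∑ j, M i0 j * (c * v j) = lam * (c * v i0) := by
      have hsum : ∑ j, M i0 j * (c * v j) = c * ∑ j, M i0 j * v j := by
        rw [Finset.mul_sum]; exact Finset.sum_congr rfl fun j _ => by ring
      have hMv0 : ∑ j, M i0 j * v j = lam * v i0 := by
        have h := congrFun hMv i0
        simpa [Matrix.mulVec, dotProduct] using h
      rw [hsum, hMv0]; ring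
    have key : ‖μ‖ * (c * v i0) ≤ lam * (c * v i0) := by
      calc ‖μ‖ * (c * v i0) = ‖(A.mulVec w) i0‖ := by rw [h1, hwi0]
        _ ≤ ∑ j, M i0 j * (c * v j) := h2.trans h3
        _ = lam * (c * v i0) := h4
    exact le_of_mul_le_mul_right key (mul_pos hcpos (hv i0))
  have hbdd : BddAbove S := ⟨lam, hbound⟩
  exact le_antisymm (csSup_le ⟨lam, hmem⟩ hbound) (le_csSup hbdd hmem)
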